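/- Let C be a cartesian closed category with finite products and let P : C^op → Pos be a universal slat-doctrine (reindexing along projections has right adjoints ∀_{pr} satisfying Beck–Chevalley). For objects A₁, A₂ of C and the projection pr₁ : A₁×A₂ → A₁, define a map ∀^ex_{pr₁} : P^ex(A₁×A₂) → P^ex(A₁) on the existential completion by (A₁×A₂, B, α) ↦ (A₁, B^{A₂}, ∀_{⟨pr₁,pr₃⟩}(P_{⟨pr₁,pr₂,ev⟨pr₂,pr₃⟩⟩}(α))), where pr_i are the projections from A₁×A₂×B^{A₂} and ev : A₂×B^{A₂} → B is evaluation. Then ∀^ex_{pr₁} is right adjoint to P^ex_{pr₁}: for all (A₁,C,γ) ∈ P^ex(A₁) and (A₁×A₂,B,α) ∈ P^ex(A₁×A₂), P^ex_{pr₁}(A₁,C,γ) ≤ (A₁×A₂,B,α) if and only if (A₁,C,γ) ≤ ∀^ex_{pr₁}(A₁×A₂,B,α). -/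

import Mathlib

open CategoryTheory CategoryTheory.Limits CategoryTheory.MonoidalCategory Opposite
open CategoryTheory.CartesianClosed

universe u v

variable {C : Type u} [Category.{v} C] [CartesianMonoidalCategory C] [MonoidalClosed C]

/-- The fibre of a slat-doctrine `P : Cᵒᵖ ⥤ Pos` over an object `X` of `C`. -/
abbrev Fib (P : Cᵒᵖ ⥤ PartOrd) (X : C) : Type _ := (P.obj (op X) : Type _)

/-- Reindexing along `f : X ⟶ Y` (the monotone map `P f : P Y → P X`). -/
def rIdx (P : Cᵒᵖ ⥤ PartOrd) {X Y : C} (f : X ⟶ Y) (a : Fib P Y) : Fib P X :=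
  (P.map f.op).hom.toFun a

/-- Objects of the fibre of the existential completion over `A`: triples `(A,B,α)` with
`α ∈ P (A × B)`. -/
abbrev QObj (P : Cᵒᵖ ⥤ PartOrd) (A : C) : Type _ := Σ B : C, Fib P (A ⊗ B)

/-- The order of the existential completion `P^ex`:
`(A,B,α) ≤ (A,C,γ)` iff there is `f : A×B ⟶ C` with `α ≤ P⟨pr_A,f⟩(γ)`. -/
def ExLe (P : Cᵒᵖ ⥤ PartOrd) {A : C} (x y : QObj P A) : Prop :=
  ∃ f : A ⊗ x.1 ⟶ y.1,
    x.2 ≤ rIdx P (CartesianMonoidalCategory.lift (CartesianMonoidalCategory.fst A x.1) f) y.2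

/-- Reindexing of the existential completion along `f : X ⟶ Y`. -/
def QReindex (P : Cᵒᵖ ⥤ PartOrd) {X Y : C} (f : X ⟶ Y) (y : QObj P Y) : QObj P X :=
  ⟨y.1, rIdx P (f ▷ y.1) y.2⟩

/-- The map `⟨pr₁, pr₂, ev⟨pr₂,pr₃⟩⟩ : A₁ × B^{A₂} × A₂ ⟶ A₁ × A₂ × B` (with the triple
products bracketed as shown), where `ev` is the evaluation of the exponential. -/
noncomputable def evMap (A₁ A₂ B : C) : (A₁ ⊗ (A₂ ⟹ B)) ⊗ A₂ ⟶ (A₁ ⊗ A₂) ⊗ B :=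
  CartesianMonoidalCategory.lift
    (CartesianMonoidalCategory.lift
      (CartesianMonoidalCategory.fst _ _ ≫ CartesianMonoidalCategory.fst _ _)
      (CartesianMonoidalCategory.snd _ _))
    (CartesianMonoidalCategory.lift (CartesianMonoidalCategory.snd _ _)
        (CartesianMonoidalCategory.fst _ _ ≫ CartesianMonoidalCategory.snd _ _) ≫
      (ihom.ev A₂).app B)

/-- The universal quantifier `∀^ex_{pr₁}` of the existential completion along
`pr₁ : A₁ × A₂ ⟶ A₁`, defined via exponentials from the universal structure `Au` of `P`:
`(A₁×A₂, B, α) ↦ (A₁, B^{A₂}, ∀_{⟨pr₁,pr₃⟩}(P_{⟨pr₁,pr₂,ev⟨pr₂,pr₃⟩⟩}(α)))`. -/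
noncomputable def exAll (P : Cᵒᵖ ⥤ PartOrd)
    (Au : ∀ {X Y : C}, Fib P (X ⊗ Y) → Fib P X) (A₁ A₂ : C)
    (x : QObj P (A₁ ⊗ A₂)) : QObj P A₁ :=
  ⟨A₂ ⟹ x.1, Au (rIdx P (evMap A₁ A₂ x.1) x.2)⟩

open CartesianMonoidalCategory in
omit [MonoidalClosed C] in
theorem swap_swap' (X Y : C) :
    CartesianMonoidalCategory.lift (CartesianMonoidalCategory.snd X Y) (CartesianMonoidalCategory.fst X Y) ≫
      CartesianMonoidalCategory.lift (CartesianMonoidalCategory.snd Y X) (CartesianMonoidalCategory.fst Y X) =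
      𝟙 (X ⊗ Y) := by
  apply CartesianMonoidalCategory.hom_ext <;> simp

omit [CartesianMonoidalCategory C] [MonoidalClosed C] in
theorem rIdx_comp' (P : Cᵒᵖ ⥤ PartOrd) {X Y Z : C} (f : X ⟶ Y) (g : Y ⟶ Z) (a : Fib P Z) :
    rIdx P (f ≫ g) a = rIdx P f (rIdx P g a) := by
  simp [rIdx, op_comp, Functor.map_comp]

omit [CartesianMonoidalCategory C] [MonoidalClosed C] in
theorem rIdx_mono' (P : Cᵒᵖ ⥤ PartOrd) {X Y : C} (f : X ⟶ Y) {a b : Fib P Y} (h : a ≤ b) :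
    rIdx P f a ≤ rIdx P f b := (P.map f.op).hom.monotone h

/-- If `C` is cartesian closed and `P` is a universal slat-doctrine (with right adjoints
`Au` along projections satisfying Beck–Chevalley), then `∀^ex_{pr₁}` is right adjoint to
the reindexing `P^ex_{pr₁}` in the existential completion. -/
theorem exAll_right_adjoint (P : Cᵒᵖ ⥤ PartOrd)
    (Au : ∀ {X Y : C}, Fib P (X ⊗ Y) → Fib P X)
    (adj : ∀ {X Y : C} (b : Fib P X) (a : Fib P (X ⊗ Y)),
      rIdx P (CartesianMonoidalCategory.fst X Y) b ≤ a ↔ b ≤ Au a)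
    (bc : ∀ {X X' Y : C} (f : X ⟶ X') (a : Fib P (X' ⊗ Y)),
      rIdx P f (Au a) = Au (rIdx P (f ▷ Y) a))
    (A₁ A₂ : C) (y : QObj P A₁) (x : QObj P (A₁ ⊗ A₂)) :
    ExLe P (QReindex P (CartesianMonoidalCategory.fst A₁ A₂) y) x ↔
      ExLe P y (exAll P Au A₁ A₂ x) := by
  obtain ⟨B, α⟩ := x
  obtain ⟨D, γ⟩ := y
  simp only [ExLe, QReindex, exAll] at *
  -- the swap morphisms between `(A₁ ⊗ D) ⊗ A₂` and `(A₁ ⊗ A₂) ⊗ D`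
  set s : (A₁ ⊗ D) ⊗ A₂ ⟶ (A₁ ⊗ A₂) ⊗ D :=
    CartesianMonoidalCategory.lift
      (CartesianMonoidalCategory.lift
        (CartesianMonoidalCategory.fst _ _ ≫ CartesianMonoidalCategory.fst _ _)
        (CartesianMonoidalCategory.snd _ _))
      (CartesianMonoidalCategory.fst _ _ ≫ CartesianMonoidalCategory.snd _ _) with hs
  set s' : (A₁ ⊗ A₂) ⊗ D ⟶ (A₁ ⊗ D) ⊗ A₂ :=
    CartesianMonoidalCategory.lift
      (CartesianMonoidalCategory.lift
        (CartesianMonoidalCategory.fst _ _ ≫ CartesianMonoidalCategory.fst _ _)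
        (CartesianMonoidalCategory.snd _ _))
      (CartesianMonoidalCategory.fst _ _ ≫ CartesianMonoidalCategory.snd _ _) with hs'
  have hss' : s ≫ s' = 𝟙 _ := by
    apply CartesianMonoidalCategory.hom_ext
    · apply CartesianMonoidalCategory.hom_ext <;> simp [hs, hs']
    · simp [hs, hs']
  have hs's : s' ≫ s = 𝟙 _ := by
    apply CartesianMonoidalCategory.hom_ext
    · apply CartesianMonoidalCategory.hom_ext <;> simp [hs, hs']
    · simp [hs, hs']
  have hsfst : s ≫ (CartesianMonoidalCategory.fst A₁ A₂ ▷ D) =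
      CartesianMonoidalCategory.fst (A₁ ⊗ D) A₂ := by
    apply CartesianMonoidalCategory.hom_ext <;> simp [hs]
  -- key morphism computation: the second component of `(⟨fst,g⟩ ▷ A₂) ≫ evMap`
  have key2 : ∀ g : A₁ ⊗ D ⟶ A₂ ⟹ B,
      ((CartesianMonoidalCategory.lift (CartesianMonoidalCategory.fst A₁ D) g ▷ A₂) ≫
          evMap A₁ A₂ B) ≫ CartesianMonoidalCategory.snd _ _ =
        CartesianMonoidalCategory.lift (CartesianMonoidalCategory.snd _ _)
          (CartesianMonoidalCategory.fst _ _) ≫ MonoidalClosed.uncurry g := by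
    intro g
    rw [MonoidalClosed.uncurry_eq]
    simp only [evMap, Category.assoc, CartesianMonoidalCategory.lift_snd]
    rw [← Category.assoc, ← Category.assoc]
    congr 1
    apply CartesianMonoidalCategory.hom_ext <;> simp
  -- key morphism computation: the first component
  have key1 : ∀ g : A₁ ⊗ D ⟶ A₂ ⟹ B,
      ((CartesianMonoidalCategory.lift (CartesianMonoidalCategory.fst A₁ D) g ▷ A₂) ≫
          evMap A₁ A₂ B) ≫ CartesianMonoidalCategory.fst _ _ =
        s ≫ CartesianMonoidalCategory.fst _ _ := by
    intro g
    apply CartesianMonoidalCategory.hom_ext <;> simp [evMap, hs]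
  constructor
  · rintro ⟨f, hf⟩
    refine ⟨MonoidalClosed.curry
      (CartesianMonoidalCategory.lift (CartesianMonoidalCategory.snd _ _)
        (CartesianMonoidalCategory.fst _ _) ≫ s ≫ f), ?_⟩
    set g := MonoidalClosed.curry
      (CartesianMonoidalCategory.lift (CartesianMonoidalCategory.snd _ _)
        (CartesianMonoidalCategory.fst _ _) ≫ s ≫ f) with hg
    show γ ≤ rIdx P _ (Au (rIdx P (evMap A₁ A₂ B) α))
    rw [bc, ← adj, ← rIdx_comp']
    have hE : (CartesianMonoidalCategory.lift (CartesianMonoidalCategory.fst A₁ D) g ▷ A₂) ≫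
        evMap A₁ A₂ B =
        s ≫ CartesianMonoidalCategory.lift (CartesianMonoidalCategory.fst (A₁ ⊗ A₂) D) f := by
      apply CartesianMonoidalCategory.hom_ext
      · rw [key1]; simp
      · rw [key2, hg, MonoidalClosed.uncurry_curry, ← Category.assoc, ← Category.assoc,
          swap_swap']
        simp
    rw [hE, rIdx_comp']
    have hγ : rIdx P (CartesianMonoidalCategory.fst (A₁ ⊗ D) A₂) γ =
        rIdx P s (rIdx P (CartesianMonoidalCategory.fst A₁ A₂ ▷ D) γ) := by
      rw [← rIdx_comp', hsfst]
    rw [hγ]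
    exact rIdx_mono' P s hf
  · rintro ⟨g, hg⟩
    rw [show rIdx P (CartesianMonoidalCategory.lift (CartesianMonoidalCategory.fst A₁ D) g)
          (Au (rIdx P (evMap A₁ A₂ B) α)) =
        Au (rIdx P ((CartesianMonoidalCategory.lift (CartesianMonoidalCategory.fst A₁ D) g ▷ A₂) ≫
          evMap A₁ A₂ B) α) by rw [bc, rIdx_comp'], ← adj] at hg
    set k := (CartesianMonoidalCategory.lift (CartesianMonoidalCategory.fst A₁ D) g ▷ A₂) ≫
      evMap A₁ A₂ B with hk
    refine ⟨s' ≫ k ≫ CartesianMonoidalCategory.snd _ _, ?_⟩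
    set f := s' ≫ k ≫ CartesianMonoidalCategory.snd _ _ with hf
    have hE : k = s ≫ CartesianMonoidalCategory.lift (CartesianMonoidalCategory.fst (A₁ ⊗ A₂) D) f := by
      apply CartesianMonoidalCategory.hom_ext
      · rw [hk, key1]; simp
      · rw [hf]
        simp only [CartesianMonoidalCategory.comp_lift, CartesianMonoidalCategory.lift_snd,
          Category.assoc]
        rw [← Category.assoc s s', hss', Category.id_comp]
    show rIdx P (CartesianMonoidalCategory.fst A₁ A₂ ▷ D) γ ≤ rIdx P _ α
    have h1 : (CartesianMonoidalCategory.fst A₁ A₂ ▷ D) =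
        s' ≫ CartesianMonoidalCategory.fst (A₁ ⊗ D) A₂ := by
      rw [← hsfst, ← Category.assoc, hs's, Category.id_comp]
    calc rIdx P (CartesianMonoidalCategory.fst A₁ A₂ ▷ D) γ
        = rIdx P s' (rIdx P (CartesianMonoidalCategory.fst (A₁ ⊗ D) A₂) γ) := by
          rw [h1, rIdx_comp']
      _ ≤ rIdx P s' (rIdx P k α) := rIdx_mono' P s' hg
      _ = rIdx P (s' ≫ k) α := (rIdx_comp' P _ _ _).symm
      _ = rIdx P (CartesianMonoidalCategory.lift (CartesianMonoidalCategory.fst (A₁ ⊗ A₂) D) f) α := by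
          rw [hE, ← Category.assoc, hs's, Category.id_comp]
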